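/- Let P(t) be a random row-stochastic matrix with E[P_{ij}(t)] = d_j/l independent of the past, and let Y(t) = (I − diag(a)) P(t) Y(t−1) + diag(a) c(t) where c(t) is independent of P(t). Then the conditional expectation of the in-degree-weighted average X̄(t) = (1/l) Σ_i d_i Y_i(t) given the history up to t−1 equals (Σ_w q_w (1 − a_w)) · X̄(t−1) + (1/l) Σ_i d_i a_i E[c_i(t)], where q_w = Σ_{i : type(i)=w} d_i / l and types determine a_i. -/
import Mathlib


open Finset

/-- one-step conditional expectation of the in-degree weighted
average opinion, over a finite probability space of network/intervention
realizations at time `t`. -/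
theorem stmt_13 {V Ω S : Type*} [Fintype V] [Fintype Ω] [Fintype S]
    [DecidableEq Ω]
    (type : V → Ω) (a : Ω → ℝ) (dd : Ω → ℝ)
    (ha : ∀ w, a w ∈ Set.Icc (0:ℝ) 1) (hdd : ∀ w, 0 < dd w)
    (l : ℝ) (hl : l = ∑ i, dd (type i)) (hlpos : 0 < l)
    (μ : S → ℝ) (hμ0 : ∀ s, 0 ≤ μ s) (hμsum : ∑ s, μ s = 1)
    (P : S → V → V → ℝ)
    (hProw : ∀ s i, ∑ j, P s i j = 1)
    (hEP : ∀ i j, ∑ s, μ s * P s i j = dd (type j) / l)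
    (c : S → V → ℝ) (hc : ∀ s i, c s i ∈ Set.Icc (0:ℝ) 1)
    (Ec : V → ℝ) (hEc : ∀ i, ∑ s, μ s * c s i = Ec i)
    (Y : V → ℝ) (hY : ∀ i, Y i ∈ Set.Icc (0:ℝ) 1) :
    ∑ s, μ s * ((1 / l) * ∑ i, dd (type i) *
        ((1 - a (type i)) * (∑ j, P s i j * Y j) + a (type i) * c s i))
      = (∑ w, ((∑ i ∈ Finset.univ.filter fun i => type i = w,
            dd (type i)) / l) * (1 - a w)) *
          ((1 / l) * ∑ i, dd (type i) * Y i)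
        + (1 / l) * ∑ i, dd (type i) * a (type i) * Ec i := by
  have h1 : ∀ i, ∑ s, μ s * ∑ j, P s i j * Y j
      = (1 / l) * ∑ j, dd (type j) * Y j := by
    intro i
    have step : ∑ s, μ s * ∑ j, P s i j * Y j
        = ∑ j, (∑ s, μ s * P s i j) * Y j := by
      simp_rw [Finset.mul_sum, Finset.sum_mul, mul_assoc]
      exact Finset.sum_comm
    rw [step]
    simp_rw [hEP]
    rw [Finset.mul_sum]
    apply Finset.sum_congr rfl
    intro j _
    ring
  have hfb : (∑ w, ((∑ i ∈ Finset.univ.filter fun i => type i = w,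
        dd (type i)) / l) * (1 - a w))
      = (1 / l) * ∑ i, dd (type i) * (1 - a (type i)) := by
    have key : ∀ w : Ω, ((∑ i ∈ Finset.univ.filter fun i => type i = w,
        dd (type i)) / l) * (1 - a w)
        = (1 / l) * ∑ i ∈ Finset.univ.filter fun i => type i = w,
            dd (type i) * (1 - a (type i)) := by
      intro w
      have hs : ∑ i ∈ Finset.univ.filter fun i => type i = w,
            dd (type i) * (1 - a (type i))
          = (∑ i ∈ Finset.univ.filter fun i => type i = w,
            dd (type i)) * (1 - a w) := by
        rw [Finset.sum_mul]
        apply Finset.sum_congr rfl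
        intro i hi
        rw [Finset.mem_filter] at hi
        rw [hi.2]
      rw [hs]
      ring
    simp_rw [key]
    rw [← Finset.mul_sum]
    congr 1
    exact Finset.sum_fiberwise_of_maps_to (fun i _ => Finset.mem_univ (type i)) _
  rw [hfb]
  have expand : ∑ s, μ s * ((1 / l) * ∑ i, dd (type i) *
        ((1 - a (type i)) * (∑ j, P s i j * Y j) + a (type i) * c s i))
      = (1 / l) * ∑ i, (dd (type i) * (1 - a (type i)) *
          (∑ s, μ s * ∑ j, P s i j * Y j)
        + dd (type i) * a (type i) * (∑ s, μ s * c s i)) := by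
    have e1 : ∀ s, μ s * ((1 / l) * ∑ i, dd (type i) *
          ((1 - a (type i)) * (∑ j, P s i j * Y j) + a (type i) * c s i))
        = ∑ i, ((1 / l) * (dd (type i) * (1 - a (type i)))
            * (μ s * ∑ j, P s i j * Y j)
          + (1 / l) * (dd (type i) * a (type i)) * (μ s * c s i)) := by
      intro s
      rw [Finset.mul_sum, Finset.mul_sum]
      apply Finset.sum_congr rfl
      intro i _
      ring
    simp_rw [e1]
    rw [Finset.sum_comm, Finset.mul_sum]
    apply Finset.sum_congr rfl
    intro i _
    rw [Finset.sum_add_distrib, ← Finset.mul_sum, ← Finset.mul_sum]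
    ring
  rw [expand]
  simp_rw [h1, hEc]
  rw [Finset.sum_add_distrib, mul_add]
  congr 1
  rw [← Finset.sum_mul]
  ring
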